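/- arXiv:1707.06733 — 4 statements merged into one kernel-verified Lean document; each statement's English description precedes it below -/
import Mathlib

section
/- Let R be a 2-dimensional Noetherian regular local domain with maximal ideal M and fraction field L, and let a, b ∈ M be nonzero elements having no common prime factor. Then the kernel of the R-algebra homomorphism R[t] → L from the polynomial ring R[t] determined by t ↦ a/b is the principal prime ideal (bt − a)R[t], and this ideal is contained in M·R[t]. -/
/-!  Subrings of a field `K` are used as the ambient setting: a local domain `R` with
fraction field `K` is represented as a subring of `K` with `IsFractionRing R K`. -/

namespace Dicritical

variable {K : Type*} [Field K]

/-- The set of nonunits of a subring `R` of `K`; when `R` is a local ring this is the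
underlying set of its maximal ideal `m_R`. -/
def mSet (R : Subring K) : Set K := {x | ∃ h : x ∈ R, ¬IsUnit (⟨x, h⟩ : R)}

/-- The ideal of `R` generated by its nonunits; when `R` is a local ring this is its
maximal ideal `m_R`. -/
def mIdeal (R : Subring K) : Ideal R := Ideal.span {a : R | ¬IsUnit a}

/-- `S` (birationally) dominates `R`: `R ⊆ S` and `m_S ∩ R = m_R`. -/
def Dominates (S R : Subring K) : Prop := R ≤ S ∧ mSet R ⊆ mSet S

/-- `R` is a Noetherian regular local ring: local, Noetherian, and the maximal ideal is
generated by (Krull dimension)-many elements. -/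
def IsRegularLocalSubring (R : Subring K) : Prop :=
  IsNoetherianRing R ∧ IsLocalRing R ∧
    ∃ s : Finset R, Ideal.span (s : Set R) = mIdeal R ∧ (s.card : WithBot ℕ∞) = ringKrullDim R

/-- `R` is a `d`-dimensional Noetherian regular local ring. -/
def IsRegularLocalOfDim (d : ℕ) (R : Subring K) : Prop :=
  IsNoetherianRing R ∧ IsLocalRing R ∧ ringKrullDim R = d ∧
    ∃ s : Finset R, Ideal.span (s : Set R) = mIdeal R ∧ s.card = d

/-- The subring `R[m_R / x]` of `K` generated by `R` and the quotients `y/x`, `y ∈ m_R`. -/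
def blowRing (R : Subring K) (x : K) : Subring K :=
  Subring.closure (↑R ∪ {z | ∃ y ∈ mSet R, z = y * x⁻¹})

lemma le_blowRing (R : Subring K) (x : K) : R ≤ blowRing R x :=
  fun _ h => Subring.subset_closure (Or.inl h)

/-- The localization of a subring `A` of `K` at the complement of a subset `Q`
(the prime ideal), as a subset of `K`. -/
def locSet (A : Subring K) (Q : Set K) : Set K :=
  {z | ∃ a ∈ A, ∃ b ∈ A, b ∉ Q ∧ z = a * b⁻¹}

/-- The underlying subset of `K` of an ideal of a subring of `K`. -/
def idealSet (R : Subring K) (I : Ideal R) : Set K := ((↑) : R → K) '' (I : Set R)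

/-- `T` is a first local quadratic transform of `R` (both regarded as subrings of a common
field `K`): `T` is the localization of `A = R[m_R/x]` at a prime `Q` of `A` with
`Q ∩ R = m_R`, for an element `x ∈ m_R` with `m_R·A = x·A`. -/
def IsFirstQuadratic (R T : Subring K) : Prop :=
  ∃ x ∈ mSet R,
    (∀ y ∈ mSet R, ∃ t ∈ blowRing R x, y = x * t) ∧
    ∃ Q : Ideal (blowRing R x), Q.IsPrime ∧
      idealSet _ Q ∩ (R : Set K) = mSet R ∧
      (T : Set K) = locSet (blowRing R x) (idealSet _ Q)

end Dicritical


open IsLocalRing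

section Aux
variable {S : Type*} [CommRing S]

lemma aux_artinian_of_torsion [IsLocalRing S] (M : Type*) [AddCommGroup M] [Module S M]
    [Module.Finite S M]
    (htor : ∀ s ∈ maximalIdeal S, ∀ x : M, s • x = 0) : IsArtinian S M := by
  set m := maximalIdeal S with hm
  have hTB : Module.IsTorsionBySet S M (m : Set S) := fun x s => htor s.1 s.2 x
  letI : Module (S ⧸ m) M := hTB.module
  haveI : IsScalarTower S (S ⧸ m) M := hTB.isScalarTower
  haveI : Module.Finite (S ⧸ m) M := Module.Finite.of_restrictScalars_finite S (S ⧸ m) M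
  letI : Field (S ⧸ m) := Ideal.Quotient.field m
  haveI : IsArtinianRing (S ⧸ m) := inferInstance
  haveI : IsArtinian (S ⧸ m) M := isArtinian_of_fg_of_artinian'
  have hsm : ∀ (s : S) (x : M), (Ideal.Quotient.mk m s) • x = s • x := by
    intro s x
    rw [← Ideal.Quotient.algebraMap_eq, Algebra.algebraMap_eq_smul_one, smul_assoc, one_smul]
  let F : Submodule S M → Submodule (S ⧸ m) M := fun N =>
    { carrier := N
      add_mem' := fun h1 h2 => N.add_mem h1 h2
      zero_mem' := N.zero_mem
      smul_mem' := by
        intro c x hx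
        obtain ⟨s, rfl⟩ := Ideal.Quotient.mk_surjective c
        simpa [hsm] using N.smul_mem s hx }
  have hmono : ∀ {N N' : Submodule S M}, N < N' → F N < F N' := by
    intro N N' h
    refine lt_of_le_of_ne (fun x hx => h.le hx) (fun hEq => h.ne ?_)
    have := SetLike.ext_iff.mp hEq
    exact SetLike.ext fun x => this x
  rw [isArtinian_iff]
  exact Subrelation.wf (fun {a b} h => hmono h)
    (InvImage.wf F ((isArtinian_iff _ _).mp inferInstance))

lemma aux_artinianRing_of_nilpotent [IsNoetherianRing S] [IsLocalRing S]
    (h : IsNilpotent (maximalIdeal S)) : IsArtinianRing S := by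
  obtain ⟨N, hN⟩ := h
  rw [Ideal.zero_eq_bot] at hN
  set m := maximalIdeal S with hmdef
  have step : ∀ i : ℕ, IsArtinian S ↥(m ^ (i + 1) : Ideal S) → IsArtinian S ↥(m ^ i : Ideal S) := by
    intro i hart
    have hle : (m ^ (i + 1) : Ideal S) ≤ m ^ i := Ideal.pow_le_pow_right (Nat.le_succ i)
    set W : Submodule S ↥(m ^ i : Ideal S) :=
      Submodule.comap (m ^ i : Ideal S).subtype (m ^ (i + 1)) with hW
    haveI : IsArtinian S ↥(m ^ (i + 1) : Ideal S) := hart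
    haveI : Module.Finite S ↥(m ^ i : Ideal S) :=
      Module.Finite.iff_fg.mpr (IsNoetherian.noetherian _)
    haveI artQ : IsArtinian S (↥(m ^ i : Ideal S) ⧸ W) := by
      apply aux_artinian_of_torsion
      intro s hs x
      obtain ⟨y, rfl⟩ := Submodule.Quotient.mk_surjective W x
      rw [← Submodule.Quotient.mk_smul, Submodule.Quotient.mk_eq_zero]
      show ((s • y : ↥(m ^ i : Ideal S)) : S) ∈ (m ^ (i + 1) : Ideal S)
      have h1 : s * (y : S) ∈ m * m ^ i := Ideal.mul_mem_mul hs y.2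
      have h2 : m * m ^ i = m ^ (i + 1) := by rw [pow_succ, mul_comm]
      rw [← h2]
      exact h1
    exact isArtinian_of_range_eq_ker (Submodule.inclusion hle) W.mkQ
      (by rw [Submodule.range_inclusion, Submodule.ker_mkQ])
  have key : ∀ j : ℕ, IsArtinian S ↥(m ^ (N - j) : Ideal S) := by
    intro j
    induction j with
    | zero =>
      rw [Nat.sub_zero, show (m ^ N : Ideal S) = ⊥ from hN]
      infer_instance
    | succ k ih =>
      by_cases hk : N ≤ k
      · have : N - (k + 1) = N - k := by omega
        rw [this]; exact ih
      · have : N - k = (N - (k + 1)) + 1 := by omega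
        rw [this] at ih
        exact step _ ih
  have := key N
  rw [Nat.sub_self, pow_zero, Ideal.one_eq_top] at this
  exact isArtinian_of_linearEquiv (Submodule.topEquiv)

lemma aux_ideal_eq_span_pow [IsNoetherianRing S] [IsLocalRing S] {t : S}
    (hm : maximalIdeal S = Ideal.span {t}) {I : Ideal S} (hI : I ≠ ⊥) :
    ∃ n : ℕ, I = Ideal.span {t ^ n} := by
  have hmne : maximalIdeal S ≠ ⊤ := (maximalIdeal.isMaximal S).ne_top
  have hKrull : ⨅ i : ℕ, (maximalIdeal S) ^ i = ⊥ :=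
    Ideal.iInf_pow_eq_bot_of_isLocalRing _ hmne
  have hpow : ∀ n : ℕ, (maximalIdeal S) ^ n = Ideal.span {t ^ n} := by
    intro n; rw [hm, Ideal.span_singleton_pow]
  have hex : ∃ k, ¬ I ≤ (maximalIdeal S) ^ k := by
    by_contra hcon
    push_neg at hcon
    exact hI (le_bot_iff.mp (hKrull ▸ le_iInf hcon))
  classical
  have h0 : ¬ ¬ I ≤ (maximalIdeal S) ^ 0 := by
    simp [pow_zero, Ideal.one_eq_top]
  set k₀ := Nat.find hex with hk₀def
  have hk₀ : ¬ I ≤ (maximalIdeal S) ^ k₀ := Nat.find_spec hex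
  have hk₀pos : k₀ ≠ 0 := by
    intro h0'
    rw [h0'] at hk₀
    exact hk₀ (by simp [pow_zero, Ideal.one_eq_top])
  set n := k₀ - 1 with hndef
  have hIn : I ≤ (maximalIdeal S) ^ n := by
    by_contra hcon
    have h2 : k₀ ≤ n := Nat.find_le hcon
    omega
  have hInot : ¬ I ≤ (maximalIdeal S) ^ (n + 1) := by
    have : n + 1 = k₀ := by omega
    rw [this]; exact hk₀
  obtain ⟨u, huI, hun⟩ := SetLike.not_le_iff_exists.mp hInot
  have hu_mem : u ∈ Ideal.span {t ^ n} := by rw [← hpow]; exact hIn huI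
  obtain ⟨c, hc⟩ := Ideal.mem_span_singleton.mp hu_mem
  have hcunit : IsUnit c := by
    by_contra hcu
    have hcm : c ∈ maximalIdeal S := by
      rw [IsLocalRing.mem_maximalIdeal]; exact hcu
    rw [hm, Ideal.mem_span_singleton] at hcm
    obtain ⟨d, hd⟩ := hcm
    apply hun
    rw [hpow, Ideal.mem_span_singleton]
    exact ⟨d, by rw [hc, hd, pow_succ]; ring⟩
  refine ⟨n, le_antisymm (by rw [← hpow]; exact hIn) ?_⟩
  rw [Ideal.span_le, Set.singleton_subset_iff]
  have : t ^ n = u * ↑hcunit.unit⁻¹ := by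
    rw [hc, mul_assoc, IsUnit.mul_val_inv, mul_one]
  rw [this]
  exact I.mul_mem_right _ huI


lemma aux_max_quotient {R : Type*} [CommRing R] [IsLocalRing R] (I : Ideal R)
    [Nontrivial (R ⧸ I)] [IsLocalRing (R ⧸ I)] :
    maximalIdeal (R ⧸ I) = (maximalIdeal R).map (Ideal.Quotient.mk I) := by
  have hcom : Ideal.comap (Ideal.Quotient.mk I) (maximalIdeal (R ⧸ I)) = maximalIdeal R := by
    haveI := maximalIdeal.isMaximal (R ⧸ I)
    have h1 : (Ideal.comap (Ideal.Quotient.mk I) (maximalIdeal (R ⧸ I))).IsMaximal :=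
      Ideal.comap_isMaximal_of_surjective _ Ideal.Quotient.mk_surjective
    exact IsLocalRing.eq_maximalIdeal h1
  conv_lhs => rw [← Ideal.map_comap_of_surjective _ Ideal.Quotient.mk_surjective
    (maximalIdeal (R ⧸ I))]
  rw [hcom]

lemma aux_span_ne_top {R : Type*} [CommRing R] [IsLocalRing R] {x : R}
    (hxm : x ∈ maximalIdeal R) : Ideal.span {x} ≠ ⊤ := by
  intro h
  have h1 : (1 : R) ∈ maximalIdeal R :=
    (Ideal.span_le.mpr (Set.singleton_subset_iff.mpr hxm)) (h ▸ Submodule.mem_top)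
  exact (maximalIdeal.isMaximal R).ne_top ((Ideal.eq_top_iff_one _).mpr h1)

lemma aux_prime_principal {R : Type*} [CommRing R] [IsDomain R] [IsNoetherianRing R]
    [IsLocalRing R] {x y : R} (hm : maximalIdeal R = Ideal.span {x, y})
    {p : Ideal R} (hp : p.IsPrime) (hp0 : p ≠ ⊥) (hxp : x ∉ p) :
    ∃ u : R, u ∈ p ∧ p = Ideal.span {u} := by
  have hxm : x ∈ maximalIdeal R := hm ▸ Ideal.subset_span (by simp)
  have hIne : Ideal.span {x} ≠ ⊤ := aux_span_ne_top hxm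
  haveI := Ideal.Quotient.nontrivial_iff.mpr hIne
  haveI : IsLocalRing (R ⧸ Ideal.span {x}) :=
    IsLocalRing.of_surjective' _ Ideal.Quotient.mk_surjective
  set π := Ideal.Quotient.mk (Ideal.span {x}) with hπ
  have hmaxq' : maximalIdeal (R ⧸ Ideal.span {x}) = Ideal.span {π y} := by
    rw [aux_max_quotient, hm, Ideal.map_span, Set.image_pair]
    have hx0 : π x = 0 := Ideal.Quotient.eq_zero_iff_mem.mpr (Ideal.mem_span_singleton_self x)
    rw [hx0]
    exact Submodule.span_insert_zero
  have hjac : Ideal.span {x} ≤ Ideal.jacobson ⊥ := by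
    rw [IsLocalRing.jacobson_eq_maximalIdeal ⊥ bot_ne_top]
    exact Ideal.span_le.mpr (Set.singleton_subset_iff.mpr hxm)
  by_cases hbot : p.map π = ⊥
  · exfalso
    have hple : p ≤ Ideal.span {x} := by
      intro v hv
      have hv0 : π v ∈ p.map π := Ideal.mem_map_of_mem _ hv
      rw [hbot, Ideal.mem_bot] at hv0
      exact Ideal.Quotient.eq_zero_iff_mem.mp hv0
    have hsm : p ≤ Ideal.span {x} • p := by
      intro v hv
      obtain ⟨c, hc⟩ := Ideal.mem_span_singleton.mp (hple hv)
      have hcp : c ∈ p := (hp.mem_or_mem (hc ▸ hv)).resolve_left hxp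
      rw [hc]
      exact Submodule.smul_mem_smul (Ideal.mem_span_singleton_self x) hcp
    exact hp0 (Submodule.eq_bot_of_le_smul_of_le_jacobson_bot _ _
      (IsNoetherian.noetherian p) hsm hjac)
  · obtain ⟨n, hn⟩ := aux_ideal_eq_span_pow hmaxq' hbot
    have hmem : (π y) ^ n ∈ p.map π := by
      rw [hn]; exact Ideal.mem_span_singleton_self _
    obtain ⟨u, hup, hu⟩ :=
      (Ideal.mem_map_iff_of_surjective π Ideal.Quotient.mk_surjective).mp hmem
    have hclaim : p ≤ Ideal.span {u} ⊔ Ideal.span {x} • p := by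
      intro v hv
      have h1 : π v ∈ Ideal.span {π u} := by
        rw [hu, ← hn]; exact Ideal.mem_map_of_mem _ hv
      obtain ⟨c', hc'⟩ := Ideal.mem_span_singleton.mp h1
      obtain ⟨c, rfl⟩ := Ideal.Quotient.mk_surjective c'
      have hsub : v - u * c ∈ Ideal.span {x} := by
        apply Ideal.Quotient.eq_zero_iff_mem.mp
        rw [map_sub, map_mul, ← hc']
        ring
      obtain ⟨e, he⟩ := Ideal.mem_span_singleton.mp hsub
      have hep : e ∈ p := by
        have hxe : x * e ∈ p := by rw [← he]; exact p.sub_mem hv (p.mul_mem_right c hup)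
        exact (hp.mem_or_mem hxe).resolve_left hxp
      have hv' : v = u * c + x * e := by linear_combination he
      rw [hv']
      exact Submodule.add_mem_sup (Ideal.mem_span_singleton.mpr ⟨c, rfl⟩)
        (Submodule.smul_mem_smul (Ideal.mem_span_singleton_self x) hep)
    have hle : p ≤ Ideal.span {u} :=
      Submodule.le_of_le_smul_of_le_jacobson_bot (IsNoetherian.noetherian p) hjac hclaim
    exact ⟨u, hup, le_antisymm hle (Ideal.span_le.mpr (Set.singleton_subset_iff.mpr hup))⟩

lemma aux_pit0 {R : Type*} [CommRing R] [IsDomain R] [IsNoetherianRing R] [IsLocalRing R]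
    {z : R} (hzm : z ∈ maximalIdeal R)
    (honly : ∀ Q : Ideal R, Q.IsPrime → z ∈ Q → Q = maximalIdeal R)
    {p : Ideal R} (hp : p.IsPrime) (hplt : p < maximalIdeal R) : p = ⊥ := by
  classical
  have hzp : z ∉ p := fun hzp => hplt.ne (honly p hp hzp)
  have hIne : Ideal.span {z} ≠ ⊤ := aux_span_ne_top hzm
  haveI := Ideal.Quotient.nontrivial_iff.mpr hIne
  haveI : IsLocalRing (R ⧸ Ideal.span {z}) :=
    IsLocalRing.of_surjective' _ Ideal.Quotient.mk_surjective
  set π := Ideal.Quotient.mk (Ideal.span {z}) with hπ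
  have hallprime : ∀ Q : Ideal (R ⧸ Ideal.span {z}), Q.IsPrime →
      Q = maximalIdeal (R ⧸ Ideal.span {z}) := by
    intro Q hQ
    have hcom : (Ideal.comap π Q).IsPrime := hQ.comap π
    have hzin : z ∈ Ideal.comap π Q := by
      show π z ∈ Q
      have hz0 : π z = 0 := Ideal.Quotient.eq_zero_iff_mem.mpr (Ideal.mem_span_singleton_self z)
      rw [hz0]; exact Q.zero_mem
    have h2 := honly _ hcom hzin
    calc Q = (Ideal.comap π Q).map π :=
          (Ideal.map_comap_of_surjective _ Ideal.Quotient.mk_surjective Q).symm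
      _ = (maximalIdeal R).map π := by rw [h2]
      _ = maximalIdeal _ := (aux_max_quotient _).symm
  have hnil : IsNilpotent (maximalIdeal (R ⧸ Ideal.span {z})) := by
    have h1 : nilradical (R ⧸ Ideal.span {z}) = maximalIdeal (R ⧸ Ideal.span {z}) := by
      rw [nilradical_eq_sInf]
      apply le_antisymm
      · exact sInf_le ((maximalIdeal.isMaximal _).isPrime)
      · exact le_sInf fun J hJ => (hallprime J hJ).ge
    rw [← h1]
    exact IsNoetherianRing.isNilpotent_nilradical _
  haveI hart : IsArtinianRing (R ⧸ Ideal.span {z}) := aux_artinianRing_of_nilpotent hnil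
  set L := Localization.AtPrime p with hL
  set φ := algebraMap R L with hφ
  set Mx := maximalIdeal L with hMx
  set P : ℕ → Ideal R := fun n => Ideal.comap φ (Mx ^ n) with hP
  have hPanti : ∀ {i j : ℕ}, i ≤ j → P j ≤ P i := fun hij =>
    Ideal.comap_mono (Ideal.pow_le_pow_right hij)
  have hjac : Ideal.span {z} ≤ Ideal.jacobson (⊥ : Ideal R) := by
    rw [IsLocalRing.jacobson_eq_maximalIdeal ⊥ bot_ne_top]
    exact Ideal.span_le.mpr (Set.singleton_subset_iff.mpr hzm)
  obtain ⟨n, hstab0⟩ := IsArtinian.monotone_stabilizes (R := R ⧸ Ideal.span {z})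
    (M := R ⧸ Ideal.span {z})
    ⟨fun n => OrderDual.toDual ((P n).map π), fun i j hij => by
      simp only [OrderDual.toDual_le_toDual]
      exact Ideal.map_mono (hPanti hij)⟩
  have hstab : (P n).map π = (P (n + 1)).map π :=
    congrArg OrderDual.ofDual (hstab0 (n + 1) (Nat.le_succ n))
  have hPeq : P n = P (n + 1) := by
    refine le_antisymm ?_ (hPanti (Nat.le_succ n))
    have hclaim : P n ≤ P (n + 1) ⊔ Ideal.span {z} • P n := by
      intro v hv
      have h1 : π v ∈ (P (n + 1)).map π := by
        rw [← hstab]; exact Ideal.mem_map_of_mem _ hv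
      obtain ⟨w, hw, hwv⟩ :=
        (Ideal.mem_map_iff_of_surjective π Ideal.Quotient.mk_surjective).mp h1
      have hsub : v - w ∈ Ideal.span {z} := by
        apply Ideal.Quotient.eq_zero_iff_mem.mp
        rw [map_sub, hwv, sub_self]
      obtain ⟨e, he⟩ := Ideal.mem_span_singleton.mp hsub
      have hze : z * e ∈ P n := by
        rw [← he]; exact (P n).sub_mem hv (hPanti (Nat.le_succ n) hw)
      have hzu : IsUnit (φ z) := IsLocalization.map_units L (⟨z, hzp⟩ : p.primeCompl)
      have heP : e ∈ P n := by
        show φ e ∈ Mx ^ n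
        have h2 : φ z * φ e ∈ Mx ^ n := by rw [← map_mul]; exact hze
        have h3 : φ e = ↑hzu.unit⁻¹ * (φ z * φ e) := by
          rw [← mul_assoc, IsUnit.val_inv_mul, one_mul]
        rw [h3]
        exact Ideal.mul_mem_left _ _ h2
      have hv' : v = w + z * e := by linear_combination he
      rw [hv']
      exact Submodule.add_mem_sup hw
        (Submodule.smul_mem_smul (Ideal.mem_span_singleton_self z) heP)
    exact Submodule.le_of_le_smul_of_le_jacobson_bot (IsNoetherian.noetherian (P n)) hjac hclaim
  haveI : IsNoetherianRing L := IsLocalization.isNoetherianRing p.primeCompl L ‹_›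
  have hMn : Mx ^ n = Mx ^ (n + 1) := by
    have h1 : (P n).map φ = Mx ^ n := IsLocalization.map_comap p.primeCompl L _
    have h2 : (P (n + 1)).map φ = Mx ^ (n + 1) := IsLocalization.map_comap p.primeCompl L _
    rw [← h1, ← h2, hPeq]
  have hMbot : Mx ^ n = ⊥ := by
    apply Submodule.eq_bot_of_le_smul_of_le_jacobson_bot Mx (Mx ^ n)
      (IsNoetherian.noetherian _)
    · have h4 : Mx • Mx ^ n = Mx ^ (n + 1) := by
        rw [smul_eq_mul, ← pow_succ']
      rw [h4, ← hMn]
    · rw [IsLocalRing.jacobson_eq_maximalIdeal ⊥ bot_ne_top]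
  have hMxbot : Mx = ⊥ := by
    cases n with
    | zero =>
      exfalso
      rw [pow_zero, Ideal.one_eq_top] at hMbot
      have h5 : (1 : L) ∈ (⊥ : Ideal L) := hMbot ▸ Submodule.mem_top
      exact one_ne_zero (Ideal.mem_bot.mp h5)
    | succ k =>
      rw [eq_bot_iff]
      intro w hw
      have h6 : w ^ (k + 1) ∈ Mx ^ (k + 1) := Ideal.pow_mem_pow hw _
      rw [hMbot, Ideal.mem_bot] at h6
      exact Ideal.mem_bot.mpr (pow_eq_zero_iff (Nat.succ_ne_zero k) |>.mp h6)
  have hinj : Function.Injective φ :=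
    IsLocalization.injective L p.primeCompl_le_nonZeroDivisors
  have hcomap := Localization.AtPrime.comap_maximalIdeal (I := p)
  rw [← hcomap]
  show Ideal.comap φ (maximalIdeal L) = ⊥
  rw [← hMx, hMxbot, ← RingHom.ker_eq_comap_bot]
  exact (RingHom.injective_iff_ker_eq_bot φ).mp hinj

lemma aux_not_dim2 {R : Type*} [CommRing R] [IsDomain R] [IsLocalRing R]
    (hall : ∀ P : Ideal R, P.IsPrime → P < maximalIdeal R → P = ⊥)
    (hdim : ringKrullDim R = 2) : False := by
  obtain ⟨c, hc⟩ : ∃ c : LTSeries (PrimeSpectrum R), 1 < c.length := by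
    by_contra hcon
    push_neg at hcon
    have hle : ringKrullDim R ≤ 1 := by
      unfold ringKrullDim Order.krullDim
      exact iSup_le fun pser => by exact_mod_cast hcon pser
    rw [hdim] at hle
    norm_num at hle
  have h2len : 2 < c.length + 1 := by omega
  set P0 := c.toFun ⟨0, by omega⟩ with hP0
  set P1 := c.toFun ⟨1, by omega⟩ with hP1
  set P2 := c.toFun ⟨2, h2len⟩ with hP2
  have h01 : P0 < P1 := c.strictMono (by simp [Fin.lt_def])
  have h12 : P1 < P2 := c.strictMono (by simp [Fin.lt_def])
  have hP2le : P2.asIdeal ≤ maximalIdeal R := IsLocalRing.le_maximalIdeal P2.isPrime.ne_top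
  rcases hP2le.lt_or_eq with h | h
  · have hb := hall P2.asIdeal P2.isPrime h
    have : P1.asIdeal < (⊥ : Ideal R) := hb ▸ ((PrimeSpectrum.asIdeal_lt_asIdeal _ _).mpr h12)
    exact not_lt_bot this
  · have hlt : P1.asIdeal < maximalIdeal R :=
      h ▸ ((PrimeSpectrum.asIdeal_lt_asIdeal _ _).mpr h12)
    have hb := hall P1.asIdeal P1.isPrime hlt
    have : P0.asIdeal < (⊥ : Ideal R) := hb ▸ ((PrimeSpectrum.asIdeal_lt_asIdeal _ _).mpr h01)
    exact not_lt_bot this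

lemma aux_irreducible_prime {R : Type*} [CommRing R] [IsDomain R] [IsNoetherianRing R]
    [IsLocalRing R] (hdim : ringKrullDim R = 2) {x y : R}
    (hm : maximalIdeal R = Ideal.span {x, y}) {q : R} (hq : Irreducible q) : Prime q := by
  have hq0 : q ≠ 0 := hq.ne_zero
  have hqm : q ∈ maximalIdeal R := by
    rw [IsLocalRing.mem_maximalIdeal]
    exact hq.not_isUnit
  have hspanle : Ideal.span {q} ≤ maximalIdeal R :=
    Ideal.span_le.mpr (Set.singleton_subset_iff.mpr hqm)
  haveI : (maximalIdeal R).IsPrime := (maximalIdeal.isMaximal R).isPrime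
  obtain ⟨p, hpmin, hpm⟩ := Ideal.exists_minimalPrimes_le hspanle
  have hpprime : p.IsPrime := hpmin.1.1
  have hqp : q ∈ p := hpmin.1.2 (Ideal.mem_span_singleton_self q)
  by_cases hpm2 : p = maximalIdeal R
  · exfalso
    have honly : ∀ Q : Ideal R, Q.IsPrime → q ∈ Q → Q = maximalIdeal R := by
      intro Q hQ hqQ
      have hQle : Q ≤ maximalIdeal R := IsLocalRing.le_maximalIdeal hQ.ne_top
      have hQge : p ≤ Q := hpmin.2 ⟨hQ, Ideal.span_le.mpr (Set.singleton_subset_iff.mpr hqQ)⟩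
        (hpm2 ▸ hQle)
      exact le_antisymm hQle (hpm2 ▸ hQge)
    exact aux_not_dim2 (fun P hP hPlt => aux_pit0 hqm honly hP hPlt) hdim
  · have hplt : p < maximalIdeal R := lt_of_le_of_ne hpm hpm2
    have hp0 : p ≠ ⊥ := by
      intro hb
      rw [hb, Ideal.mem_bot] at hqp
      exact hq0 hqp
    have hxy : x ∉ p ∨ y ∉ p := by
      by_contra hcon
      push_neg at hcon
      have : maximalIdeal R ≤ p := by
        rw [hm, Ideal.span_le]
        rintro w (rfl | rfl)
        exacts [hcon.1, hcon.2]
      exact hplt.not_ge this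
    have hupr : ∃ u : R, u ∈ p ∧ p = Ideal.span {u} := by
      rcases hxy with hx | hy
      · exact aux_prime_principal hm hpprime hp0 hx
      · exact aux_prime_principal (by rw [hm, Ideal.span_pair_comm]) hpprime hp0 hy
    obtain ⟨u, hup, hspan⟩ := hupr
    have hu0 : u ≠ 0 := by
      intro h0
      apply hp0
      rw [hspan, h0, Ideal.span_singleton_eq_bot]
    have huprime : Prime u := (Ideal.span_singleton_prime hu0).mp (hspan ▸ hpprime)
    obtain ⟨c, rfl⟩ : u ∣ q := Ideal.mem_span_singleton.mp (hspan ▸ hqp)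
    have hcunit : IsUnit c := (hq.isUnit_or_isUnit rfl).resolve_left huprime.not_unit
    have hassoc : Associated u (u * c) := ⟨hcunit.unit, by rw [IsUnit.unit_spec]⟩
    exact hassoc.prime huprime

open Polynomial in
lemma aux_ker_ind {A K : Type*} [CommRing A] [IsDomain A] [Field K] [Algebra A K]
    (hinj : Function.Injective (algebraMap A K)) {a b : A}
    (hb0 : algebraMap A K b ≠ 0)
    (hdvd : ∀ (c : A) (k : ℕ), b ∣ c * a ^ k → b ∣ c) :
    ∀ (n : ℕ) (f : A[X]), f.natDegree ≤ n →
      Polynomial.eval₂ (algebraMap A K) (algebraMap A K a / algebraMap A K b) f = 0 →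
      f ∈ Ideal.span {C b * X - C a} := by
  intro n
  induction n with
  | zero =>
    intro f hdeg heval
    rw [Polynomial.eq_C_of_natDegree_le_zero hdeg] at heval ⊢
    rw [eval₂_C] at heval
    have h0 : f.coeff 0 = 0 := hinj (by rw [heval, map_zero])
    rw [h0, map_zero]
    exact Ideal.zero_mem _
  | succ n IH =>
    intro f hdeg heval
    rcases le_or_gt f.natDegree n with h | h
    · exact IH f h heval
    have hdeg' : f.natDegree = n + 1 := le_antisymm hdeg h
    set φ := algebraMap A K with hφdef
    set t : K := φ a / φ b with ht
    have hsum : φ (∑ i ∈ Finset.range (n + 2), f.coeff i * a ^ i * b ^ (n + 1 - i)) = 0 := by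
      rw [map_sum]
      have hterm : ∀ i ∈ Finset.range (n + 2),
          φ (f.coeff i * a ^ i * b ^ (n + 1 - i)) = φ b ^ (n + 1) * (φ (f.coeff i) * t ^ i) := by
        intro i hi
        rw [Finset.mem_range] at hi
        rw [map_mul, map_mul, map_pow, map_pow, ht, div_pow]
        rw [show φ b ^ (n + 1) = φ b ^ i * φ b ^ (n + 1 - i) from by
          rw [← pow_add]; congr 1; omega]
        have hbi : φ b ^ i ≠ 0 := pow_ne_zero _ hb0
        field_simp
      rw [Finset.sum_congr rfl hterm, ← Finset.mul_sum]
      have he := Polynomial.eval₂_eq_sum_range φ t (p := f)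
      rw [hdeg'] at he
      rw [← he, heval, mul_zero]
    have hs0 : (∑ i ∈ Finset.range (n + 2), f.coeff i * a ^ i * b ^ (n + 1 - i)) = 0 :=
      hinj (by rw [hsum, map_zero])
    have hfact : f.coeff (n + 1) * a ^ (n + 1) =
        b * (-(∑ i ∈ Finset.range (n + 1), f.coeff i * a ^ i * b ^ (n - i))) := by
      rw [Finset.sum_range_succ] at hs0
      have hper : ∀ i ∈ Finset.range (n + 1),
          f.coeff i * a ^ i * b ^ (n + 1 - i) = b * (f.coeff i * a ^ i * b ^ (n - i)) := by
        intro i hi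
        rw [Finset.mem_range] at hi
        rw [show n + 1 - i = (n - i) + 1 from by omega, pow_succ]
        ring
      rw [Finset.sum_congr rfl hper, ← Finset.mul_sum] at hs0
      rw [show n + 1 - (n + 1) = 0 from by omega, pow_zero, mul_one] at hs0
      linear_combination hs0
    obtain ⟨d, hd⟩ := hdvd (f.coeff (n + 1)) (n + 1) ⟨_, hfact⟩
    set g := f - C d * X ^ n * (C b * X - C a) with hg
    have hexp : C d * X ^ n * (C b * X - C a)
        = C (d * b) * X ^ (n + 1) - C (d * a) * X ^ n := by
      rw [map_mul, map_mul]; ring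
    have hgdeg : g.natDegree ≤ n := by
      rw [Polynomial.natDegree_le_iff_coeff_eq_zero]
      intro N hN
      rw [hg, hexp, Polynomial.coeff_sub, Polynomial.coeff_sub, Polynomial.coeff_C_mul,
        Polynomial.coeff_C_mul, Polynomial.coeff_X_pow, Polynomial.coeff_X_pow]
      rcases eq_or_lt_of_le (Nat.succ_le_of_lt hN) with hN1 | hN1
      · rw [← hN1, if_pos rfl, if_neg (by omega), hd]
        ring
      · have hfc : f.coeff N = 0 := Polynomial.coeff_eq_zero_of_natDegree_lt (by omega)
        rw [hfc, if_neg (by omega), if_neg (by omega)]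
        ring
    have hkey : φ b * t - φ a = 0 := by
      rw [ht]
      field_simp
      ring
    have hgeval : Polynomial.eval₂ φ t g = 0 := by
      have hfac : Polynomial.eval₂ φ t (C d * X ^ n * (C b * X - C a))
          = φ d * t ^ n * (φ b * t - φ a) := by
        simp [Polynomial.eval₂_mul, Polynomial.eval₂_sub, Polynomial.eval₂_pow]
      rw [hg, Polynomial.eval₂_sub, heval, hfac, hkey, mul_zero, zero_sub, neg_zero]
    have hgmem := IH g hgdeg hgeval
    have hfg : f = g + C d * X ^ n * (C b * X - C a) := by rw [hg]; ring
    rw [hfg]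
    exact Ideal.add_mem _ hgmem (Ideal.mul_mem_left _ _ (Ideal.subset_span (Set.mem_singleton _)))

end Aux

open Dicritical Polynomial in
/-- for a 2-dimensional Noetherian regular local domain `R` with fraction
field `K` and nonzero `a, b ∈ m_R` with no common prime factor, the kernel of the `R`-algebra
map `R[t] → K`, `t ↦ a/b`, is the principal prime ideal `(b·t − a)R[t]`, which is contained
in `m_R·R[t]`. -/
theorem stmt5 {K : Type*} [Field K] (R : Subring K) [IsFractionRing R K]
    (hR : IsRegularLocalOfDim 2 R) (a b : R)
    (ha : a ∈ mIdeal R) (hb : b ∈ mIdeal R) (ha0 : a ≠ 0) (hb0 : b ≠ 0)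
    (hcop : ∀ p : R, p ∣ a → p ∣ b → IsUnit p) :
    RingHom.ker (eval₂RingHom (algebraMap R K) ((a : K) / (b : K))) =
      Ideal.span {C b * X - C a} ∧
    (Ideal.span {C b * X - C a} : Ideal (Polynomial R)).IsPrime ∧
    RingHom.ker (eval₂RingHom (algebraMap R K) ((a : K) / (b : K))) ≤
      Ideal.map (C : R →+* Polynomial R) (mIdeal R) := by
  classical
  obtain ⟨hNoeth, hLoc, hdim, s, hspan, hcard⟩ := hR
  haveI := hNoeth
  haveI := hLoc
  have hmI : mIdeal R = IsLocalRing.maximalIdeal ↥R := by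
    apply le_antisymm
    · rw [mIdeal, Ideal.span_le]
      intro w hw
      rw [SetLike.mem_coe, IsLocalRing.mem_maximalIdeal]
      exact hw
    · intro w hw
      exact Ideal.subset_span (mem_nonunits_iff.mp ((IsLocalRing.mem_maximalIdeal w).mp hw))
  obtain ⟨g1, g2, hgne, hgs⟩ := Finset.card_eq_two.mp hcard
  have hmgen : IsLocalRing.maximalIdeal ↥R = Ideal.span {g1, g2} := by
    rw [← hmI, ← hspan, hgs]
    congr 1
    simp
  have hdim' : ringKrullDim ↥R = 2 := by exact_mod_cast hdim
  have hirr : ∀ q : ↥R, Irreducible q → Prime q := fun q hq =>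
    aux_irreducible_prime hdim' hmgen hq
  haveI hwf : WfDvdMonoid ↥R := IsNoetherianRing.wfDvdMonoid
  haveI : UniqueFactorizationMonoid ↥R :=
    { hwf with irreducible_iff_prime := fun {q} => ⟨hirr q, Prime.irreducible⟩ }
  have hrel : IsRelPrime b a := fun d hdb hda => hcop d hda hdb
  have hdvd : ∀ (c : ↥R) (k : ℕ), b ∣ c * a ^ k → b ∣ c := fun c k h =>
    (hrel.pow_right (n := k)).dvd_of_dvd_mul_left (by rwa [mul_comm] at h)
  have hinj : Function.Injective (algebraMap ↥R K) := IsFractionRing.injective ↥R K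
  have hb0K : algebraMap ↥R K b ≠ 0 := fun h => hb0 (hinj (by rw [h, map_zero]))
  have hker_le : RingHom.ker (eval₂RingHom (algebraMap R K) ((a : K) / (b : K))) ≤
      Ideal.span {C b * X - C a} := by
    intro f hf
    rw [RingHom.mem_ker] at hf
    exact aux_ker_ind hinj hb0K hdvd f.natDegree f le_rfl hf
  have hspan_le : Ideal.span {C b * X - C a} ≤
      RingHom.ker (eval₂RingHom (algebraMap R K) ((a : K) / (b : K))) := by
    rw [Ideal.span_le]
    intro w hw
    rw [Set.mem_singleton_iff] at hw
    subst hw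
    rw [SetLike.mem_coe, RingHom.mem_ker, coe_eval₂RingHom, Polynomial.eval₂_sub,
      Polynomial.eval₂_mul, Polynomial.eval₂_C, Polynomial.eval₂_C, Polynomial.eval₂_X]
    have : (algebraMap ↥R K b) * ((a : K) / (b : K)) - algebraMap ↥R K a = 0 := by
      have hba : algebraMap ↥R K b = (b : K) := rfl
      have haa : algebraMap ↥R K a = (a : K) := rfl
      have hbK : (b : K) ≠ 0 := hba ▸ hb0K
      rw [hba, haa, mul_comm, div_mul_cancel₀ _ hbK, sub_self]
    exact this
  have hker_eq : RingHom.ker (eval₂RingHom (algebraMap R K) ((a : K) / (b : K))) =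
      Ideal.span {C b * X - C a} := le_antisymm hker_le hspan_le
  refine ⟨hker_eq, ?_, ?_⟩
  · rw [← hker_eq]
    exact RingHom.ker_isPrime _
  · rw [hker_eq]
    intro f hf
    obtain ⟨g, hg⟩ := Ideal.mem_span_singleton.mp hf
    rw [Ideal.mem_map_C_iff]
    intro k
    have hfexp : f = C b * (X * g) - C a * g := by rw [hg]; ring
    rw [hfexp, Polynomial.coeff_sub, Polynomial.coeff_C_mul, Polynomial.coeff_C_mul]
    exact Ideal.sub_mem _ ((mIdeal R).mul_mem_right _ hb) ((mIdeal R).mul_mem_right _ ha)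
end

section
/- Let k be a field, let m and n be positive integers with gcd(m, n) = 1, and let f = X^m Y^n ∈ k[X, Y]. Then f is not a ring generator of k[X, Y]: there is no polynomial g ∈ k[X, Y] such that the k-subalgebra of k[X, Y] generated by f and g equals k[X, Y]. -/
open MvPolynomial in
/-- Example 2.515: for coprime positive integers `m, n`, the polynomial
`f = X^m Y^n` is not a ring generator of `k[X, Y]`: there is no `g` with `k[f, g] = k[X, Y]`. -/
theorem stmt10 (k : Type*) [Field k] (m n : ℕ) (hm : 0 < m) (hn : 0 < n)
    (hmn : Nat.gcd m n = 1) :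
    ¬ ∃ g : MvPolynomial (Fin 2) k,
        Algebra.adjoin k {(X 0 : MvPolynomial (Fin 2) k) ^ m * X 1 ^ n, g} = ⊤ := by
  rintro ⟨g, hg⟩
  set f : MvPolynomial (Fin 2) k := X 0 ^ m * X 1 ^ n with hf
  set I : Ideal (MvPolynomial (Fin 2) k) := Ideal.span {f} with hI
  set mk := Ideal.Quotient.mkₐ k I with hmk
  have hmkf : mk f = 0 := Ideal.Quotient.eq_zero_iff_mem.2 (Ideal.subset_span rfl)
  -- evaluation killing the second variable
  let φ : MvPolynomial (Fin 2) k →ₐ[k] Polynomial k := aeval ![Polynomial.X, 0]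
  have hφX : φ (X 0) = Polynomial.X := by simp [φ]
  have hφf : φ f = 0 := by
    simp [φ, hf, zero_pow hn.ne']
  -- evaluation killing the first variable
  let φ' : MvPolynomial (Fin 2) k →ₐ[k] Polynomial k := aeval ![0, Polynomial.X]
  have hφ'X : φ' (X 1) = Polynomial.X := by simp [φ']
  have hφ'f : φ' f = 0 := by
    simp [φ', hf, zero_pow hm.ne']
  -- key: nothing nonzero of the form q(X 0) lies in I
  have key : ∀ q : Polynomial k, Polynomial.aeval (X 0 : MvPolynomial (Fin 2) k) q ∈ I → q = 0 := by
    intro q hq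
    have hdvd : f ∣ Polynomial.aeval (X 0 : MvPolynomial (Fin 2) k) q :=
      Ideal.mem_span_singleton.1 hq
    have := map_dvd φ hdvd
    rw [hφf, Polynomial.aeval_algHom_apply φ (X 0) q |>.symm, hφX,
      Polynomial.aeval_X_left_apply] at this
    exact zero_dvd_iff.1 this
  have hx : mk (X 0) ≠ 0 := by
    intro h
    have := key Polynomial.X (by simpa using Ideal.Quotient.eq_zero_iff_mem.1 h)
    exact Polynomial.X_ne_zero this
  have hy : mk (X 1) ≠ 0 := by
    intro h
    have hdvd : f ∣ (X 1 : MvPolynomial (Fin 2) k) :=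
      Ideal.mem_span_singleton.1 (Ideal.Quotient.eq_zero_iff_mem.1 h)
    have := map_dvd φ' hdvd
    rw [hφ'f, hφ'X] at this
    exact Polynomial.X_ne_zero (zero_dvd_iff.1 this)
  -- the quotient is generated by the image of g
  have hadj : Algebra.adjoin k {mk g} = ⊤ := by
    have h1 := AlgHom.map_adjoin mk {f, g}
    rw [hg, Set.image_pair, hmkf] at h1
    have h2 : Subalgebra.map mk ⊤ = ⊤ := by
      rw [Algebra.map_top]
      exact (AlgHom.range_eq_top mk).2 (Ideal.Quotient.mkₐ_surjective k I)
    rw [h2] at h1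
    refine le_antisymm le_top ?_
    rw [h1]
    refine Algebra.adjoin_le ?_
    rintro x (rfl | rfl)
    · exact Subalgebra.zero_mem _
    · exact Algebra.subset_adjoin rfl
  set ψ : Polynomial k →ₐ[k] (MvPolynomial (Fin 2) k ⧸ I) := Polynomial.aeval (mk g) with hψ
  have hψsurj : Function.Surjective ψ := by
    rw [← AlgHom.range_eq_top, ← Algebra.adjoin_singleton_eq_range_aeval]
    exact hadj
  -- zero divisors in the quotient
  have hzero : mk (X 0) ^ m * mk (X 1) ^ n = 0 := by
    rw [← map_pow, ← map_pow, ← map_mul, ← hf, hmkf]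
  by_cases hker : RingHom.ker ψ = ⊥
  · -- ψ is an isomorphism, so the quotient is a domain: contradiction
    have hinj : Function.Injective ψ := (RingHom.injective_iff_ker_eq_bot ψ).2 hker
    have e : Polynomial k ≃ₐ[k] (MvPolynomial (Fin 2) k ⧸ I) :=
      AlgEquiv.ofBijective ψ ⟨hinj, hψsurj⟩
    have : IsDomain (MvPolynomial (Fin 2) k ⧸ I) :=
      Function.Injective.isDomain (e.symm : _ →+* Polynomial k) e.symm.injective
    rcases mul_eq_zero.1 hzero with h | h
    · exact hx (pow_eq_zero_iff hm.ne' |>.1 h)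
    · exact hy (pow_eq_zero_iff hn.ne' |>.1 h)
  · -- quotient is finite-dimensional, so mk (X 0) is integral: contradiction
    have e : (Polynomial k ⧸ RingHom.ker ψ) ≃ₐ[k] (MvPolynomial (Fin 2) k ⧸ I) :=
      Ideal.quotientKerAlgEquivOfSurjective hψsurj
    set p : Polynomial k := Submodule.IsPrincipal.generator (RingHom.ker ψ) with hp
    have hpspan : Ideal.span {p} = RingHom.ker ψ :=
      Submodule.IsPrincipal.span_singleton_generator _
    have hpne : p ≠ 0 := by
      intro h
      apply hker
      rw [← hpspan, h, Ideal.span_singleton_eq_bot]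
    have : Module.Finite k (AdjoinRoot p) := (AdjoinRoot.powerBasis hpne).finite
    have hfin : Module.Finite k (Polynomial k ⧸ RingHom.ker ψ) := by
      rw [← hpspan]; exact this
    have hfin2 : Module.Finite k (MvPolynomial (Fin 2) k ⧸ I) :=
      Module.Finite.equiv e.toLinearEquiv
    have hint : Algebra.IsIntegral k (MvPolynomial (Fin 2) k ⧸ I) :=
      Algebra.IsIntegral.of_finite k _
    obtain ⟨q, hqmonic, hq0⟩ := hint.isIntegral (mk (X 0))
    have hmem : mk (Polynomial.aeval (X 0 : MvPolynomial (Fin 2) k) q) = 0 := by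
      rw [← Polynomial.aeval_algHom_apply mk (X 0) q]
      exact hq0
    have : Polynomial.aeval (X 0 : MvPolynomial (Fin 2) k) q ∈ I :=
      Ideal.Quotient.eq_zero_iff_mem.1 hmem
    exact hqmonic.ne_zero (key q this)
end

section
/- Let R be a d-dimensional Noetherian regular local domain with d ≥ 2, maximal ideal m, and fraction field L. Let x ∈ m \ m², and let S = R[m/x] be the subring of L generated by R and the elements y/x for y ∈ m. Let K be an ideal of R that is contracted from S, i.e., K = (K·S) ∩ R. If f ∈ R and x·f ∈ K, then g·f ∈ K for every g ∈ m. -/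
open Dicritical in
/-- Proposition, contracted ideals: let `R` be a `d`-dimensional Noetherian
regular local domain (`d ≥ 2`), `x ∈ m \ m²`, and `S = R[m/x]`.  If `K` is an ideal of `R`
contracted from `S` and `x·f ∈ K`, then `g·f ∈ K` for every `g ∈ m`. -/
theorem stmt14 {L : Type*} [Field L] (R : Subring L) [IsFractionRing R L]
    (d : ℕ) (hd : 2 ≤ d) (hR : IsRegularLocalOfDim d R)
    (x : R) (hx : x ∈ mIdeal R) (hx2 : x ∉ (mIdeal R) ^ 2)
    (I : Ideal R)
    (hcontr : I = Ideal.comap (Subring.inclusion (le_blowRing R (x : L)))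
      (Ideal.map (Subring.inclusion (le_blowRing R (x : L))) I))
    (f : R) (hf : x * f ∈ I) :
    ∀ g ∈ mIdeal R, g * f ∈ I := by
  intro g hg
  have hx0 : (x : L) ≠ 0 := by
    intro h
    exact hx2 (by rw [show x = 0 from Subtype.ext h]; exact zero_mem _)
  have hgx : (g : L) * (x : L)⁻¹ ∈ blowRing R (x : L) := by
    refine Submodule.span_induction ?_ ?_ ?_ ?_ hg
    · intro a ha
      exact Subring.subset_closure (Or.inr ⟨(a : L), ⟨a.2, ha⟩, rfl⟩)
    · simpa using zero_mem (blowRing R (x : L))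
    · intro a b _ _ ha hb
      have h1 : ((a + b : R) : L) * (x : L)⁻¹ = (a : L) * (x : L)⁻¹ + (b : L) * (x : L)⁻¹ := by
        push_cast; ring
      rw [h1]; exact add_mem ha hb
    · intro r a _ ha
      have h1 : ((r • a : R) : L) * (x : L)⁻¹ = (r : L) * ((a : L) * (x : L)⁻¹) := by
        push_cast [smul_eq_mul]; ring
      rw [h1]
      exact mul_mem (le_blowRing R (x : L) r.2) ha
  rw [hcontr, Ideal.mem_comap]
  have hxf : Subring.inclusion (le_blowRing R (x : L)) (x * f) ∈
      Ideal.map (Subring.inclusion (le_blowRing R (x : L))) I :=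
    Ideal.mem_map_of_mem _ hf
  have heq : Subring.inclusion (le_blowRing R (x : L)) (g * f) =
      (⟨(g : L) * (x : L)⁻¹, hgx⟩ : blowRing R (x : L)) *
        Subring.inclusion (le_blowRing R (x : L)) (x * f) := by
    apply Subtype.ext
    show ((g * f : R) : L) = (g : L) * (x : L)⁻¹ * ((x * f : R) : L)
    push_cast
    field_simp
  rw [heq]
  exact Ideal.mul_mem_left _ _ hxf
end

section
/- Let R be a 2-dimensional Noetherian regular local domain whose maximal ideal is generated by a regular system of parameters x, y. For a positive integer N, let B(n) = n(n+1)/2, let I_N = ∏_{j=1}^{N} (y, x^j)R, and define F_N = Σ_{0 ≤ p ≤ ⌊(N−1)/2⌋} x^{B(2p+1)} y^{N−1−2p} and G_N = Σ_{0 ≤ p ≤ ⌊N/2⌋} x^{B(2p)} y^{N−2p}. Then the 2-generated ideal J_N = (F_N, G_N)R is a reduction of I_N: J_N ⊆ I_N and there exists a nonnegative integer n with J_N·I_N^n = I_N^{n+1}. -/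
namespace Dicritical

/-- `B(n) = n(n+1)/2`. -/
def B (n : ℕ) : ℕ := n * (n + 1) / 2

variable {R : Type*} [CommRing R]

/-- `F_N = Σ_{0 ≤ p ≤ ⌊(N−1)/2⌋} x^{B(2p+1)} y^{N−1−2p}`. -/
def Fpoly (x y : R) (N : ℕ) : R :=
  ∑ p ∈ Finset.range ((N - 1) / 2 + 1), x ^ B (2 * p + 1) * y ^ (N - 1 - 2 * p)

/-- `G_N = Σ_{0 ≤ p ≤ ⌊N/2⌋} x^{B(2p)} y^{N−2p}`. -/
def Gpoly (x y : R) (N : ℕ) : R :=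
  ∑ p ∈ Finset.range (N / 2 + 1), x ^ B (2 * p) * y ^ (N - 2 * p)

/-- `I_N = ∏_{j=1}^{N} (y, x^j)R`. -/
def Iprod (x y : R) (N : ℕ) : Ideal R :=
  ∏ j ∈ Finset.Icc 1 N, Ideal.span {y, x ^ j}

lemma two_mul_B (n : ℕ) : 2 * B n = n * (n + 1) := by
  unfold B
  rw [Nat.mul_div_cancel' (even_iff_two_dvd.mp (Nat.even_mul_succ_self n))]

lemma B_succ (n : ℕ) : B (n + 1) = B n + (n + 1) := by
  have h1 := two_mul_B n
  have h2 := two_mul_B (n + 1)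
  nlinarith

lemma sum_Icc_id (k : ℕ) : ∑ j ∈ Finset.Icc 1 k, j = B k := by
  induction k with
  | zero => simp [B]
  | succ k ih => rw [Finset.sum_Icc_succ_top (by omega), ih, B_succ]

/-- each monomial generator lies in `I_N` -/
lemma mgen_mem (x y : R) {N k : ℕ} (hk : k ≤ N) :
    x ^ B k * y ^ (N - k) ∈ Iprod x y N := by
  have key : x ^ B k * y ^ (N - k)
      = ∏ j ∈ Finset.Icc 1 N, (if j ≤ k then x ^ j else y) := by
    rw [Finset.prod_ite]
    have h1 : (Finset.Icc 1 N).filter (fun j => j ≤ k) = Finset.Icc 1 k := by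
      ext j; simp only [Finset.mem_filter, Finset.mem_Icc]; omega
    have h2 : (Finset.Icc 1 N).filter (fun j => ¬ j ≤ k) = Finset.Icc (k+1) N := by
      ext j; simp only [Finset.mem_filter, Finset.mem_Icc]; omega
    rw [h1, h2, Finset.prod_pow_eq_pow_sum, sum_Icc_id, Finset.prod_const,
      Nat.card_Icc, show N + 1 - (k+1) = N - k by omega]
  rw [key]
  exact Ideal.prod_mem_prod (fun j hj => by
    by_cases h : j ≤ k
    · simp only [if_pos h]
      exact Ideal.subset_span (by simp)
    · simp only [if_neg h]
      exact Ideal.subset_span (by simp))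

end Dicritical

namespace Dicritical
open Pointwise
variable {R : Type*} [CommRing R]

/-- the set of monomial generators of `I_N` -/
def mset (x y : R) (N : ℕ) : Set R := (fun k => x ^ B k * y ^ (N - k)) '' Set.Iic N

lemma Iprod_le_span (x y : R) (N : ℕ) : Iprod x y N ≤ Ideal.span (mset x y N) := by
  induction N with
  | zero =>
    have h1 : (1 : R) ∈ Ideal.span (mset x y 0) :=
      Ideal.subset_span ⟨0, Set.mem_Iic.mpr le_rfl, by simp [B]⟩
    exact le_top.trans (le_of_eq ((Ideal.eq_top_iff_one _).mpr h1).symm)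
  | succ N ih =>
    show (∏ j ∈ Finset.Icc 1 (N + 1), Ideal.span {y, x ^ j}) ≤ _
    rw [Finset.prod_Icc_succ_top (by omega : 1 ≤ N + 1)]
    calc (∏ j ∈ Finset.Icc 1 N, Ideal.span {y, x ^ j}) * Ideal.span {y, x ^ (N + 1)}
        ≤ Ideal.span (mset x y N) * Ideal.span {y, x ^ (N + 1)} :=
          Ideal.mul_mono ih le_rfl
      _ = Ideal.span (mset x y N * {y, x ^ (N + 1)}) := Ideal.span_mul_span' _ _
      _ ≤ Ideal.span (mset x y (N + 1)) := by
          rw [Ideal.span_le]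
          rintro z ⟨a, ⟨k, hk, rfl⟩, b, hb, rfl⟩
          simp only [Set.mem_Iic] at hk
          simp only [Set.mem_insert_iff, Set.mem_singleton_iff] at hb
          dsimp only
          rcases hb with rfl | rfl
          · refine Ideal.subset_span ⟨k, Set.mem_Iic.mpr (by omega), ?_⟩
            show x ^ B k * b ^ (N + 1 - k) = x ^ B k * b ^ (N - k) * b
            rw [show N + 1 - k = (N - k) + 1 by omega]
            ring
          · have e : x ^ B k * y ^ (N - k) * x ^ (N + 1)
                = x ^ (N - k) * (x ^ B (k + 1) * y ^ (N + 1 - (k + 1))) := by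
              rw [B_succ, show N + 1 - (k + 1) = N - k by omega,
                show N + 1 = (N - k) + (k + 1) by omega, pow_add, pow_add]
              ring
            rw [e]
            exact Ideal.mul_mem_left _ _
              (Ideal.subset_span ⟨k + 1, Set.mem_Iic.mpr (by omega), rfl⟩)

end Dicritical

namespace Dicritical
variable {R : Type*} [CommRing R]

/-- The auxiliary ideal `K = J·I + (x)·I²`. -/
def Kid (x y : R) (N : ℕ) : Ideal R :=
  Ideal.span {Fpoly x y N, Gpoly x y N} * Iprod x y N
    + Ideal.span {x} * (Iprod x y N * Iprod x y N)

/-- spread products: if `i + 2 ≤ j ≤ N` then `m_i m_j ∈ (x)·I²`. -/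
lemma offdiag_mem (x y : R) {N i j : ℕ} (hij : i + 2 ≤ j) (hj : j ≤ N) :
    (x ^ B i * y ^ (N - i)) * (x ^ B j * y ^ (N - j))
      ∈ Ideal.span {x} * (Iprod x y N * Iprod x y N) := by
  have hBj : B j = B (j - 1) + j := by
    have := B_succ (j - 1); rw [show j - 1 + 1 = j by omega] at this; omega
  have e : (x ^ B i * y ^ (N - i)) * (x ^ B j * y ^ (N - j))
      = x ^ (j - i - 1) *
        ((x ^ B (i + 1) * y ^ (N - (i + 1))) * (x ^ B (j - 1) * y ^ (N - (j - 1)))) := by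
    have e1 : B i + B j = (j - i - 1) + (B (i + 1) + B (j - 1)) := by
      have h1 := B_succ i
      omega
    have e2 : (N - i) + (N - j) = (N - (i + 1)) + (N - (j - 1)) := by omega
    calc (x ^ B i * y ^ (N - i)) * (x ^ B j * y ^ (N - j))
        = x ^ (B i + B j) * y ^ ((N - i) + (N - j)) := by
          rw [pow_add, pow_add]; ring
      _ = x ^ ((j - i - 1) + (B (i + 1) + B (j - 1)))
            * y ^ ((N - (i + 1)) + (N - (j - 1))) := by rw [e1, e2]
      _ = _ := by rw [pow_add, pow_add]; ring
  rw [e]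
  have hx : x ^ (j - i - 1) ∈ Ideal.span {(x : R)} := by
    rw [show j - i - 1 = (j - i - 2) + 1 by omega, pow_succ]
    exact Ideal.mul_mem_left _ _ (Ideal.subset_span rfl)
  exact Ideal.mul_mem_mul hx
    (Ideal.mul_mem_mul (mgen_mem x y (by omega)) (mgen_mem x y (by omega)))

end Dicritical

namespace Dicritical
variable {R : Type*} [CommRing R]

lemma core (x y : R) (N : ℕ) (S : R)
    (hSJ : S ∈ Ideal.span {Fpoly x y N, Gpoly x y N})
    (t ε k l q : ℕ)
    (hS : S = ∑ p ∈ Finset.range t, x ^ B (2 * p + ε) * y ^ (N - (2 * p + ε)))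
    (hq : q < t) (hk : k = 2 * q + ε)
    (hbound : ∀ p, p < t → 2 * p + ε ≤ N)
    (hl : l = k ∨ l = k + 1) (hlN : l ≤ N)
    (hnext : l = k + 1 → k + 2 ≤ N →
      (x ^ B (k + 1) * y ^ (N - (k + 1))) * (x ^ B (k + 2) * y ^ (N - (k + 2)))
        ∈ Kid x y N) :
    (x ^ B k * y ^ (N - k)) * (x ^ B l * y ^ (N - l)) ∈ Kid x y N := by
  have hmain : (x ^ B k * y ^ (N - k)) * (x ^ B l * y ^ (N - l))
      = S * (x ^ B l * y ^ (N - l))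
        - ∑ p ∈ (Finset.range t).erase q,
            (x ^ B (2 * p + ε) * y ^ (N - (2 * p + ε))) * (x ^ B l * y ^ (N - l)) := by
    rw [hS, Finset.sum_mul,
      ← Finset.add_sum_erase _ _ (Finset.mem_range.mpr hq), hk]
    ring
  rw [hmain]
  refine sub_mem ?_ ?_
  · exact Submodule.mem_sup_left (Ideal.mul_mem_mul hSJ (mgen_mem x y hlN))
  · refine Ideal.sum_mem _ (fun p hp => ?_)
    have hpq : p ≠ q := (Finset.mem_erase.mp hp).1
    have hpt : p < t := Finset.mem_range.mp (Finset.mem_erase.mp hp).2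
    have hjN : 2 * p + ε ≤ N := hbound p hpt
    by_cases h1 : 2 * p + ε + 2 ≤ l
    · exact Submodule.mem_sup_right (offdiag_mem x y h1 hlN)
    · by_cases h2 : l + 2 ≤ 2 * p + ε
      · rw [mul_comm]
        exact Submodule.mem_sup_right (offdiag_mem x y h2 hjN)
      · have h3 : l = k + 1 ∧ 2 * p + ε = k + 2 := by omega
        rw [h3.2, h3.1, mul_comm]
        exact hnext h3.1 (by omega)

lemma consec_or_diag_mem (x y : R) {N : ℕ} (hN : 0 < N) :
    ∀ d k l, k ≤ N → l ≤ N → N - k = d → (l = k ∨ l = k + 1) →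
      (x ^ B k * y ^ (N - k)) * (x ^ B l * y ^ (N - l)) ∈ Kid x y N := by
  intro d
  induction d using Nat.strong_induction_on with
  | _ d IH =>
    intro k l hk hl hd hkl
    have hnext : l = k + 1 → k + 2 ≤ N →
        (x ^ B (k + 1) * y ^ (N - (k + 1))) * (x ^ B (k + 2) * y ^ (N - (k + 2)))
          ∈ Kid x y N := fun _ h2 =>
      IH (N - (k + 1)) (by omega) (k + 1) (k + 2) (by omega) h2 rfl (Or.inr rfl)
    rcases Nat.even_or_odd k with ⟨q, hq⟩ | ⟨q, hq⟩
    · refine core x y N (Gpoly x y N)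
        (Ideal.subset_span (by simp)) (N / 2 + 1) 0 k l q ?_ ?_ ?_ ?_ hkl hl hnext
      · unfold Gpoly
        refine Finset.sum_congr rfl (fun p _ => by norm_num)
      · omega
      · omega
      · intro p hp; omega
    · refine core x y N (Fpoly x y N)
        (Ideal.subset_span (by simp)) ((N - 1) / 2 + 1) 1 k l q ?_ ?_ ?_ ?_ hkl hl hnext
      · unfold Fpoly
        refine Finset.sum_congr rfl (fun p _ => ?_)
        congr 2
        omega
      · omega
      · omega
      · intro p hp; omega

end Dicritical

namespace Dicritical
open Pointwise
variable {R : Type*} [CommRing R]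

lemma J_le_I (x y : R) {N : ℕ} (hN : 0 < N) :
    Ideal.span {Fpoly x y N, Gpoly x y N} ≤ Iprod x y N := by
  rw [Ideal.span_le]
  rintro z (rfl | rfl)
  · unfold Fpoly
    refine Ideal.sum_mem _ (fun p hp => ?_)
    have hp' := Finset.mem_range.mp hp
    rw [show N - 1 - 2 * p = N - (2 * p + 1) by omega]
    exact mgen_mem x y (by omega)
  · unfold Gpoly
    refine Ideal.sum_mem _ (fun p hp => ?_)
    have hp' := Finset.mem_range.mp hp
    exact mgen_mem x y (k := 2 * p) (by omega)

lemma sq_le_Kid (x y : R) {N : ℕ} (hN : 0 < N) :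
    Iprod x y N * Iprod x y N ≤ Kid x y N := by
  have pair : ∀ i j : ℕ, i ≤ N → j ≤ N → i ≤ j →
      (x ^ B i * y ^ (N - i)) * (x ^ B j * y ^ (N - j)) ∈ Kid x y N := by
    intro i j hi hj hij
    by_cases h : j ≤ i + 1
    · exact consec_or_diag_mem x y hN (N - i) i j hi hj rfl (by omega)
    · exact Submodule.mem_sup_right (offdiag_mem x y (by omega) hj)
  calc Iprod x y N * Iprod x y N
      ≤ Ideal.span (mset x y N) * Ideal.span (mset x y N) :=
        Ideal.mul_mono (Iprod_le_span x y N) (Iprod_le_span x y N)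
    _ = Ideal.span (mset x y N * mset x y N) := Ideal.span_mul_span' _ _
    _ ≤ Kid x y N := by
        rw [Ideal.span_le]
        rintro z ⟨a, ⟨i, hi, rfl⟩, b, ⟨j, hj, rfl⟩, rfl⟩
        simp only [Set.mem_Iic] at hi hj
        dsimp only
        rcases le_total i j with h | h
        · exact pair i j hi hj h
        · rw [mul_comm]; exact pair j i hj hi h

end Dicritical

open Dicritical in
/-- Example 5.2, Abhyankar: let `R` be a 2-dimensional Noetherian regular
local domain with maximal ideal `(x, y)R` generated by a regular system of parameters.  For
each `N ≥ 1`, the 2-generated ideal `J_N = (F_N, G_N)R` is a reduction of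
`I_N = ∏_{j=1}^{N} (y, x^j)R` (no assumption on the residue field). -/
theorem stmt19 (R : Type*) [CommRing R] [IsDomain R] [IsNoetherianRing R] [IsLocalRing R]
    (hdim : ringKrullDim R = 2)
    (x y : R) (hxy : Ideal.span {x, y} = IsLocalRing.maximalIdeal R)
    (N : ℕ) (hN : 0 < N) :
    Ideal.span {Fpoly x y N, Gpoly x y N} ≤ Iprod x y N ∧
    ∃ n : ℕ, Ideal.span {Fpoly x y N, Gpoly x y N} * Iprod x y N ^ n =
      Iprod x y N ^ (n + 1) := by
  set I : Ideal R := Iprod x y N with hI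
  set J : Ideal R := Ideal.span {Fpoly x y N, Gpoly x y N} with hJ
  have hJI : J ≤ I := J_le_I x y hN
  refine ⟨hJI, 1, ?_⟩
  rw [pow_one, show (1 : ℕ) + 1 = 2 from rfl, pow_two]
  refine le_antisymm (Ideal.mul_mono hJI le_rfl) ?_
  have hjac : Ideal.span {x} ≤ Ideal.jacobson ⊥ := by
    rw [IsLocalRing.jacobson_eq_maximalIdeal ⊥ bot_ne_top, ← hxy]
    exact Ideal.span_mono (Set.singleton_subset_iff.mpr (Set.mem_insert x {y}))
  have hfg : (I * I).FG := IsNoetherian.noetherian _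
  refine Submodule.le_of_le_smul_of_le_jacobson_bot hfg hjac ?_
  have hKN : Kid x y N = J * I ⊔ Ideal.span {x} • (I * I) := by
    rw [Kid, smul_eq_mul]
    rfl
  exact hKN ▸ sq_le_Kid x y hN
end
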